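/- Let H = f·g·∏_{i=2}^{m-2}(f + i·g) where f = 3x² + y² − 4z² and g = x² + 3y² − 4z². Then yz·∂H/∂x + xz·∂H/∂y + xy·∂H/∂z = 0; in particular mdr(H) ≤ 2. -/

import Mathlib

open MvPolynomial

/-- For the pencil member product `H = f·g·∏_{i=2}^{m-2}(f + i·g)` with
`f = 3x² + y² − 4z²` and `g = x² + 3y² − 4z²`, one has the Jacobian syzygy
`yz·∂H/∂x + xz·∂H/∂y + xy·∂H/∂z = 0`. -/
theorem jacobian_syzygy_conic_pencil (m : ℕ) (hm : 4 ≤ m) :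
    let f : MvPolynomial (Fin 3) ℂ :=
      C 3 * X 0 ^ 2 + X 1 ^ 2 - C 4 * X 2 ^ 2
    let g : MvPolynomial (Fin 3) ℂ :=
      X 0 ^ 2 + C 3 * X 1 ^ 2 - C 4 * X 2 ^ 2
    let H : MvPolynomial (Fin 3) ℂ :=
      f * g * ∏ i ∈ Finset.Icc 2 (m - 2), (f + C (i : ℂ) * g)
    X 1 * X 2 * pderiv 0 H + X 0 * X 2 * pderiv 1 H + X 0 * X 1 * pderiv 2 H = 0 := by
  intro f g H
  set D : Derivation ℂ (MvPolynomial (Fin 3) ℂ) (MvPolynomial (Fin 3) ℂ) :=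
    ((X 1 * X 2 : MvPolynomial (Fin 3) ℂ) • (pderiv 0)) + ((X 0 * X 2 : MvPolynomial (Fin 3) ℂ) • (pderiv 1)) + ((X 0 * X 1 : MvPolynomial (Fin 3) ℂ) • (pderiv 2)) with hDdef
  have hD : ∀ p : MvPolynomial (Fin 3) ℂ,
      D p = X 1 * X 2 * pderiv 0 p + X 0 * X 2 * pderiv 1 p + X 0 * X 1 * pderiv 2 p := by
    intro p
    simp [hDdef, smul_eq_mul]
  have hf : D f = 0 := by
    rw [hD]
    simp only [f, map_add, map_sub, Derivation.leibniz, Derivation.leibniz_pow, pderiv_X, pderiv_C]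
    have h3 : (C 3 : MvPolynomial (Fin 3) ℂ) = 3 := by simp [map_ofNat]
    have h4 : (C 4 : MvPolynomial (Fin 3) ℂ) = 4 := by simp [map_ofNat]
    rw [h3, h4]
    simp [Pi.single_apply, Fin.ext_iff, smul_eq_mul]
    ring
  have hg : D g = 0 := by
    rw [hD]
    simp only [g, map_add, map_sub, Derivation.leibniz, Derivation.leibniz_pow, pderiv_X, pderiv_C]
    have h3 : (C 3 : MvPolynomial (Fin 3) ℂ) = 3 := by simp [map_ofNat]
    have h4 : (C 4 : MvPolynomial (Fin 3) ℂ) = 4 := by simp [map_ofNat]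
    rw [h3, h4]
    simp [Pi.single_apply, Fin.ext_iff, smul_eq_mul]
    ring
  have hprod : D (∏ i ∈ Finset.Icc 2 (m - 2), (f + C (i : ℂ) * g)) = 0 := by
    refine Finset.prod_induction _ (fun p => D p = 0) ?_ ?_ ?_
    · intro a b ha hb
      rw [Derivation.leibniz, ha, hb, smul_zero, smul_zero, add_zero]
    · exact Derivation.map_one_eq_zero D
    · intro i _
      have : (C (i : ℂ) : MvPolynomial (Fin 3) ℂ) * g = (i : ℂ) • g := by
        rw [smul_eq_C_mul]
      rw [map_add, this, Derivation.map_smul, hf, hg, smul_zero, add_zero]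
  have hH : D H = 0 := by
    simp only [H, Derivation.leibniz, hf, hg, hprod, smul_zero, zero_add, add_zero,
      smul_eq_mul, mul_zero]
  rw [← hD]
  exact hH
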